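/- Let (σ, σ̂) and (σ', σ̂') be two pairs of set-theoretic sections of π and π̂, and let (χ⊔_{σ,σ̂}χ̂) and (χ⊔_{σ',σ̂'}χ̂) denote the corresponding functions Γ × Γ × G/N × Ĝ/N⊥ → U(1). Then there exist functions c₁ : Γ × G/N → U(1) and c₂ : Γ × Ĝ/N⊥ → U(1), each continuous in its second variable, such that, writing c(a, z, ẑ) := c₁(a, z) · c₂(a, ẑ), for all a, b ∈ Γ, z ∈ G/N, ẑ ∈ Ĝ/N⊥: (χ⊔_{σ',σ̂'}χ̂)(a, b, z, ẑ) · ((χ⊔_{σ,σ̂}χ̂)(a, b, z, ẑ))⁻¹ = c(b, z + χ(a), ẑ + χ̂(a)) · c(ba, z, ẑ)⁻¹ · c(a, z, ẑ). In particular, the cohomology class of χ⊔χ̂ is independent of the choice of the sections σ and σ̂. -/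

import Mathlib

private lemma statement14_aux {A₁ A₂ M : Type*} [AddCommGroup A₁] [AddCommGroup A₂]
    [CommGroup M] (f : A₁ → A₂ → M)
    (h1 : ∀ (p q : A₁) (z : A₂), f (p + q) z = f p z * f q z)
    (h2 : ∀ (p : A₁) (z w : A₂), f p (z + w) = f p z * f p w)
    (P : AddSubgroup A₁) (Q : AddSubgroup A₂)
    (hv : ∀ p : A₁, p ∈ P → ∀ q : A₂, q ∈ Q → f p q = 1)
    (Ah Bh Ch Ah' Bh' Ch' x : A₁) (A B C A' B' C' g : A₂)
    (hda : A' - A ∈ Q) (hdb : B' - B ∈ Q) (hdba : C' - C ∈ Q) (heta : B - C + A ∈ Q)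
    (hdah : Ah' - Ah ∈ P) (hdbh : Bh' - Bh ∈ P) (hdbah : Ch' - Ch ∈ P)
    (hetah : Bh - Ch + Ah ∈ P) :
    f Ah' B' * (f (Bh' - Ch' + Ah') C)⁻¹ * (f (Bh' - Ch' + Ah') g)⁻¹ * f x (B' - C' + A') *
      (f Ah B * (f (Bh - Ch + Ah) C)⁻¹ * (f (Bh - Ch + Ah) g)⁻¹ * f x (B - C + A))⁻¹ =
    (f (Bh' - Bh) (g + A))⁻¹ * (f (x + Ah) (B' - B) * (f (Bh' - Bh) B)⁻¹) *
      ((f (Ch' - Ch) g)⁻¹ * (f x (C' - C) * (f (Ch' - Ch) C)⁻¹))⁻¹ *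
      ((f (Ah' - Ah) g)⁻¹ * (f x (A' - A) * (f (Ah' - Ah) A)⁻¹)) := by
  have f0₁ : ∀ z, f 0 z = 1 := fun z => by
    have h := h1 0 0 z
    rw [add_zero] at h
    exact left_eq_mul.mp h
  have f0₂ : ∀ p, f p 0 = 1 := fun p => by
    have h := h2 p 0 0
    rw [add_zero] at h
    exact left_eq_mul.mp h
  have fneg₁ : ∀ p z, f (-p) z = (f p z)⁻¹ := fun p z =>
    eq_inv_of_mul_eq_one_left (by rw [← h1, neg_add_cancel, f0₁])
  have fneg₂ : ∀ p z, f p (-z) = (f p z)⁻¹ := fun p z =>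
    eq_inv_of_mul_eq_one_left (by rw [← h2, neg_add_cancel, f0₂])
  have fsub₁ : ∀ p q z, f (p - q) z = f p z * (f q z)⁻¹ := fun p q z => by
    rw [sub_eq_add_neg, h1, fneg₁]
  have fsub₂ : ∀ p z w, f p (z - w) = f p z * (f p w)⁻¹ := fun p z w => by
    rw [sub_eq_add_neg, h2, fneg₂]
  obtain ⟨da, hdaQ, rfl⟩ : ∃ u, u ∈ Q ∧ A' = A + u := ⟨A' - A, hda, by abel⟩
  obtain ⟨db, hdbQ, rfl⟩ : ∃ u, u ∈ Q ∧ B' = B + u := ⟨B' - B, hdb, by abel⟩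
  obtain ⟨dba, hdbaQ, rfl⟩ : ∃ u, u ∈ Q ∧ C' = C + u := ⟨C' - C, hdba, by abel⟩
  obtain ⟨dah, hdahP, rfl⟩ : ∃ u, u ∈ P ∧ Ah' = Ah + u := ⟨Ah' - Ah, hdah, by abel⟩
  obtain ⟨dbh, hdbhP, rfl⟩ : ∃ u, u ∈ P ∧ Bh' = Bh + u := ⟨Bh' - Bh, hdbh, by abel⟩
  obtain ⟨dbah, hdbahP, rfl⟩ : ∃ u, u ∈ P ∧ Ch' = Ch + u := ⟨Ch' - Ch, hdbah, by abel⟩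
  obtain ⟨n0, hn0Q, rfl⟩ : ∃ u, u ∈ Q ∧ C = B + A - u := ⟨B - C + A, heta, by abel⟩
  obtain ⟨m0, hm0P, rfl⟩ : ∃ u, u ∈ P ∧ Ch = Bh + Ah - u := ⟨Bh - Ch + Ah, hetah, by abel⟩
  have key : ∀ u v : M, Additive.ofMul u = Additive.ofMul v → u = v := fun u v h => h
  apply key
  simp only [h1, h2, fsub₁, fsub₂, fneg₁, fneg₂,
    hv _ hdahP _ hdaQ, hv _ hdahP _ hdbQ, hv _ hdahP _ hdbaQ, hv _ hdahP _ hn0Q,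
    hv _ hdbhP _ hdaQ, hv _ hdbhP _ hdbQ, hv _ hdbhP _ hdbaQ, hv _ hdbhP _ hn0Q,
    hv _ hdbahP _ hdaQ, hv _ hdbahP _ hdbQ, hv _ hdbahP _ hdbaQ, hv _ hdbahP _ hn0Q,
    hv _ hm0P _ hdaQ, hv _ hm0P _ hdbQ, hv _ hm0P _ hdbaQ, hv _ hm0P _ hn0Q,
    inv_one, mul_one, one_mul, ofMul_mul, ofMul_inv, ofMul_one]
  abel


/-- Let `(σ, σ̂)` and `(σ', σ̂')` be two pairs of set-theoretic sections of the quotient maps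
`π : G → G/N` and `π̂ : Ĝ → Ĝ/N⊥`, and let `χ⊔_{σ,σ̂}χ̂` and `χ⊔_{σ',σ̂'}χ̂` be the
corresponding 2-cocycles.  Then there are functions `c₁ : Γ × G/N → U(1)` and
`c₂ : Γ × Ĝ/N⊥ → U(1)`, each continuous in its second variable, such that with
`c(a, z, ẑ) := c₁(a, z)·c₂(a, ẑ)` the two cocycles differ by the coboundary
`c(b, z+χ(a), ẑ+χ̂(a)) · c(ba, z, ẑ)⁻¹ · c(a, z, ẑ)`; in particular the class of `χ⊔χ̂`
does not depend on the choice of sections. -/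
theorem statement14
    {Γ : Type*} [Group Γ] [Finite Γ]
    {G : Type*} [AddCommGroup G] [TopologicalSpace G] [IsTopologicalAddGroup G]
      [LocallyCompactSpace G] [SecondCountableTopology G] [T2Space G]
    (N : AddSubgroup G) [DiscreteTopology N] [CompactSpace (G ⧸ N)]
    -- the Pontryagin dual of `G`, abstracted by its pairing with `G`
    {Ghat : Type*} [AddCommGroup Ghat] [TopologicalSpace Ghat] [IsTopologicalAddGroup Ghat]
    (e : Ghat → G → Circle)
    (he₁ : ∀ (x y : Ghat) (g : G), e (x + y) g = e x g * e y g)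
    (he₂ : ∀ (x : Ghat) (g h : G), e x (g + h) = e x g * e x h)
    (heCont : ∀ x : Ghat, Continuous (e x))
    (hevCont : ∀ g : G, Continuous fun x : Ghat => e x g)
    -- the annihilator `N⊥` of `N`
    (Nperp : AddSubgroup Ghat)
    (hNperp : ∀ x : Ghat, x ∈ Nperp ↔ ∀ n ∈ N, e x (n : G) = 1)
    -- the well-defined pairing of `Ĝ/N⊥` with `N`
    (eQN : Ghat ⧸ Nperp → N → Circle)
    (heQN : ∀ (x : Ghat) (n : N), eQN (x : Ghat ⧸ Nperp) n = e x (n : G))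
    -- the well-defined pairing of `N⊥` with `G/N`
    (ePQ : Nperp → G ⧸ N → Circle)
    (hePQ : ∀ (p : Nperp) (g : G), ePQ p ((g : G) : G ⧸ N) = e (p : Ghat) g)
    -- the homomorphisms `χ` and `χ̂`
    (χ : Γ → G ⧸ N) (hχ : ∀ a b : Γ, χ (a * b) = χ a + χ b)
    (χhat : Γ → Ghat ⧸ Nperp) (hχhat : ∀ a b : Γ, χhat (a * b) = χhat a + χhat b)
    -- the first pair of sections `(σ, σ̂)` and its cocycle `χ⊔_{σ,σ̂}χ̂`
    (σ : G ⧸ N → G) (hσ : ∀ z : G ⧸ N, ((σ z : G) : G ⧸ N) = z)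
    (σh : Ghat ⧸ Nperp → Ghat) (hσh : ∀ zh : Ghat ⧸ Nperp, ((σh zh : Ghat) : Ghat ⧸ Nperp) = zh)
    (hη : ∀ a b : Γ, σ (χ b) - σ (χ (b * a)) + σ (χ a) ∈ N)
    (hηhat : ∀ a b : Γ, σh (χhat b) - σh (χhat (b * a)) + σh (χhat a) ∈ Nperp)
    (γ : Γ → Γ → Circle)
    (hγ : ∀ a b : Γ, γ a b = e (σh (χhat a)) (σ (χ b)) *
      (ePQ ⟨σh (χhat b) - σh (χhat (b * a)) + σh (χhat a), hηhat a b⟩ (χ (b * a)))⁻¹)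
    (sq : Γ → Γ → G ⧸ N → Ghat ⧸ Nperp → Circle)
    (hsq : ∀ (a b : Γ) (z : G ⧸ N) (zh : Ghat ⧸ Nperp),
      sq a b z zh = γ a b *
        (ePQ ⟨σh (χhat b) - σh (χhat (b * a)) + σh (χhat a), hηhat a b⟩ z)⁻¹ *
        eQN zh ⟨σ (χ b) - σ (χ (b * a)) + σ (χ a), hη a b⟩)
    -- the second pair of sections `(σ', σ̂')` and its cocycle `χ⊔_{σ',σ̂'}χ̂`
    (σ' : G ⧸ N → G) (hσ' : ∀ z : G ⧸ N, ((σ' z : G) : G ⧸ N) = z)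
    (σh' : Ghat ⧸ Nperp → Ghat)
    (hσh' : ∀ zh : Ghat ⧸ Nperp, ((σh' zh : Ghat) : Ghat ⧸ Nperp) = zh)
    (hη' : ∀ a b : Γ, σ' (χ b) - σ' (χ (b * a)) + σ' (χ a) ∈ N)
    (hηhat' : ∀ a b : Γ, σh' (χhat b) - σh' (χhat (b * a)) + σh' (χhat a) ∈ Nperp)
    (γ' : Γ → Γ → Circle)
    (hγ' : ∀ a b : Γ, γ' a b = e (σh' (χhat a)) (σ' (χ b)) *
      (ePQ ⟨σh' (χhat b) - σh' (χhat (b * a)) + σh' (χhat a), hηhat' a b⟩ (χ (b * a)))⁻¹)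
    (sq' : Γ → Γ → G ⧸ N → Ghat ⧸ Nperp → Circle)
    (hsq' : ∀ (a b : Γ) (z : G ⧸ N) (zh : Ghat ⧸ Nperp),
      sq' a b z zh = γ' a b *
        (ePQ ⟨σh' (χhat b) - σh' (χhat (b * a)) + σh' (χhat a), hηhat' a b⟩ z)⁻¹ *
        eQN zh ⟨σ' (χ b) - σ' (χ (b * a)) + σ' (χ a), hη' a b⟩) :
    -- the two cocycles differ by the coboundary of a 1-cochain of product form,
    -- continuous in the `G/N`- and `Ĝ/N⊥`-variables
    ∃ (c₁ : Γ → G ⧸ N → Circle) (c₂ : Γ → Ghat ⧸ Nperp → Circle),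
      (∀ a : Γ, Continuous (c₁ a)) ∧ (∀ a : Γ, Continuous (c₂ a)) ∧
      (∀ (a b : Γ) (z : G ⧸ N) (zh : Ghat ⧸ Nperp),
        sq' a b z zh * (sq a b z zh)⁻¹ =
          (c₁ b (z + χ a) * c₂ b (zh + χhat a)) *
            (c₁ (b * a) z * c₂ (b * a) zh)⁻¹ *
            (c₁ a z * c₂ a zh)) := by
  
  have hz : ∀ p : Ghat, p ∈ Nperp → ∀ n : G, n ∈ N → e p n = 1 :=
    fun p hp n hn => (hNperp p).mp hp n hn
  have hdN : ∀ z : G ⧸ N, σ' z - σ z ∈ N := by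
    intro z
    rw [← QuotientAddGroup.eq_zero_iff]
    rw [QuotientAddGroup.mk_sub, hσ, hσ', sub_self]
  have hdP : ∀ zh : Ghat ⧸ Nperp, σh' zh - σh zh ∈ Nperp := by
    intro zh
    rw [← QuotientAddGroup.eq_zero_iff]
    rw [QuotientAddGroup.mk_sub, hσh, hσh', sub_self]
  have hePQcont : ∀ p : Nperp, Continuous (ePQ p) := by
    intro p
    rw [(QuotientAddGroup.isQuotientMap_mk N).continuous_iff]
    have : (ePQ p ∘ (QuotientAddGroup.mk : G → G ⧸ N)) = fun g : G => e (p : Ghat) g :=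
      funext fun g => hePQ p g
    rw [this]
    exact heCont _
  have heQNcont : ∀ n : N, Continuous (fun zh : Ghat ⧸ Nperp => eQN zh n) := by
    intro n
    rw [(QuotientAddGroup.isQuotientMap_mk Nperp).continuous_iff]
    have : ((fun zh : Ghat ⧸ Nperp => eQN zh n) ∘ (QuotientAddGroup.mk : Ghat → Ghat ⧸ Nperp))
        = fun x : Ghat => e x (n : G) := funext fun x => heQN x n
    rw [this]
    exact hevCont _
  refine ⟨fun a z => (ePQ ⟨σh' (χhat a) - σh (χhat a), hdP _⟩ z)⁻¹,
    fun a zh => eQN zh ⟨σ' (χ a) - σ (χ a), hdN _⟩ *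
      (ePQ ⟨σh' (χhat a) - σh (χhat a), hdP _⟩ (χ a))⁻¹, ?_, ?_, ?_⟩
  · exact fun a => (hePQcont _).inv
  · exact fun a => (heQNcont _).mul continuous_const
  intro a b z zh
  obtain ⟨g, rfl⟩ := QuotientAddGroup.mk_surjective z
  obtain ⟨x, rfl⟩ := QuotientAddGroup.mk_surjective zh
  have E2 : ∀ (p : Nperp) (c : Γ), ePQ p (χ c) = e (p : Ghat) (σ (χ c)) := by
    intro p c
    conv_lhs => rw [← hσ (χ c)]
    exact hePQ p _
  have E3 : ∀ (p : Nperp) (g : G) (c : Γ),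
      ePQ p ((g : G ⧸ N) + χ c) = e (p : Ghat) (g + σ (χ c)) := by
    intro p g c
    rw [← hePQ p (g + σ (χ c)), QuotientAddGroup.mk_add, hσ]
  have E5 : ∀ (x : Ghat) (c : Γ) (n : N),
      eQN ((x : Ghat ⧸ Nperp) + χhat c) n = e (x + σh (χhat c)) (n : G) := by
    intro x c n
    rw [← heQN (x + σh (χhat c)) n, QuotientAddGroup.mk_add, hσh]
  simp only [hsq, hsq', hγ, hγ', E2, E3, E5, hePQ, heQN]
  exact statement14_aux e he₁ he₂ Nperp N hz
    (σh (χhat a)) (σh (χhat b)) (σh (χhat (b * a)))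
    (σh' (χhat a)) (σh' (χhat b)) (σh' (χhat (b * a))) x
    (σ (χ a)) (σ (χ b)) (σ (χ (b * a)))
    (σ' (χ a)) (σ' (χ b)) (σ' (χ (b * a))) g
    (hdN (χ a)) (hdN (χ b)) (hdN (χ (b * a))) (hη a b)
    (hdP (χhat a)) (hdP (χhat b)) (hdP (χhat (b * a))) (hηhat a b)
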